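/- Let f ∈ C_{0,2}(G₀) and let (μ,H) be a pair with H a nonzero element of the closure of C⁺(a) and ρ_μ an irreducible unitary representation of K_H of dimension d_μ. Then π_{(μ,H)}(f) is a Hilbert–Schmidt operator on H_{(μ,H)} and ‖π_{(μ,H)}(f)‖²_{HS} ≤ d_μ ‖f̂²‖²_∞. -/

import Mathlib

open MeasureTheory Filter Topology
open scoped ZeroAtInfty ENNReal

set_option maxHeartbeats 1000000
set_option synthInstance.maxHeartbeats 100000

local notation "⟪" x ", " y "⟫" => @inner ℂ _ _ x y

/-- **`π_{(μ,H)}(f)` is a Hilbert–Schmidt operator, with `‖π_{(μ,H)}(f)‖²_{HS} ≤ d_μ ‖f̂²‖²_∞`.**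

Setting for the Cartan motion group `G₀ = K ⋉ 𝔭` of a Riemannian symmetric pair `(G,K)`:
`K` is a compact group with normalized Haar measure `μK`, acting on the finite-dimensional
real inner product space `p = 𝔭` by the adjoint action `Ad` through linear isometries;
`H` is a nonzero element of the closure of the fixed Weyl chamber `C⁺(𝔞)`, with stabilizer
`KH = K_H = Z_K(H)` carrying its normalized Haar measure `ν`; `ρ = ρ_μ` is an irreducible
unitary representation of `K_H` on the finite-dimensional complex Hilbert space
`V = H_{ρ_μ}` of dimension `d_μ = finrank ℂ V`; and `F2 = f̂² ∈ C₀(K × 𝔭)` is the partial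
Fourier transform in the second variable of `f ∈ C_{0,2}(G₀)`.  The operator
`T = π_{(μ,H)}(f)` on the Hilbert space `H_{(μ,H)} = L²(K, V)` is the integral operator
`(TΨ)(h) = ∫ f_{μ,H}(h,k)(Ψ(k)) dk` with operator–valued kernel
`f_{μ,H}(h,k) = ∫_{K_H} f̂²(h s k⁻¹, Ad(h)H) ρ_μ(s) ds`.

Conclusion: `T = π_{(μ,H)}(f)` is Hilbert–Schmidt and, for every Hilbert basis `b`,
`‖T‖²_{HS} = ∑ᵢ ‖T(bᵢ)‖² ≤ d_μ ‖f̂²‖²_∞`. -/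
theorem pi_mu_H_hilbert_schmidt_bound
    {K : Type*} [Group K] [TopologicalSpace K] [IsTopologicalGroup K] [CompactSpace K]
    [MeasurableSpace K] [BorelSpace K]
    -- the normalized Haar measure on `K`
    (μK : Measure K) [μK.IsHaarMeasure] [IsProbabilityMeasure μK]
    {p : Type*} [NormedAddCommGroup p] [InnerProductSpace ℝ p] [FiniteDimensional ℝ p]
    (Ad : K →* (p ≃ₗᵢ[ℝ] p))
    (chamber : Set p) (H : p) (hH : H ∈ closure chamber) (hH0 : H ≠ 0)
    (KH : Subgroup K) [CompactSpace KH]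
    (hKH : ∀ g : K, g ∈ KH ↔ Ad g H = H)
    (ν : Measure KH) [ν.IsHaarMeasure] [IsProbabilityMeasure ν]
    {V : Type*} [NormedAddCommGroup V] [InnerProductSpace ℂ V] [FiniteDimensional ℂ V]
    (ρ : KH →* (V ≃ₗᵢ[ℂ] V))
    (hρ : Continuous fun s : KH => (ρ s).toLinearIsometry.toContinuousLinearMap)
    (hirr : ∀ U : Submodule ℂ V,
      (∀ s : KH, U.map ((ρ s).toLinearEquiv : V →ₗ[ℂ] V) ≤ U) → U = ⊥ ∨ U = ⊤)
    (F2 : C₀(K × p, ℂ))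
    -- `T = π_{(μ,H)}(f)` is the integral operator with kernel `f_{μ,H}`
    (T : Lp V 2 μK →L[ℂ] Lp V 2 μK)
    (hT : ∀ ξ : Lp V 2 μK, (T ξ : K → V) =ᵐ[μK] fun h : K =>
      ∫ k : K, (∫ s : KH,
          F2 (h * ↑s * k⁻¹, Ad h H) • (ρ s).toLinearIsometry.toContinuousLinearMap ∂ν)
        (ξ k) ∂μK)
    -- conclusion: `T` is Hilbert–Schmidt, with squared Hilbert–Schmidt norm
    -- at most `d_μ ‖f̂²‖²`
    {ι : Type*} (b : HilbertBasis ι ℂ (Lp V 2 μK)) :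
    Summable (fun i : ι => ‖T (b i)‖ ^ 2) ∧
      ∑' i : ι, ‖T (b i)‖ ^ 2 ≤ (Module.finrank ℂ V : ℝ) * ‖F2‖ ^ 2 := by
  classical
  haveI : OpensMeasurableSpace ↥KH :=
    (Subtype.opensMeasurableSpace ((KH : Set K)) :)
  set d := Module.finrank ℂ V with hd
  set v : OrthonormalBasis (Fin d) ℂ V := stdOrthonormalBasis ℂ V with hv
  set ρc : KH → (V →L[ℂ] V) := fun s => (ρ s).toLinearIsometry.toContinuousLinearMap with hρc
  set g : K → K → (V →L[ℂ] V) :=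
    fun h k => ∫ s, F2 (h * ↑s * k⁻¹, Ad h H) • ρc s ∂ν with hg
  have hT' : ∀ ξ : Lp V 2 μK, (T ξ : K → V) =ᵐ[μK] fun h : K =>
      ∫ k : K, g h k (ξ k) ∂μK := hT
  clear hT
  have hF2 : ∀ x, ‖F2 x‖ ≤ ‖F2‖ := fun x => by
    simpa [ZeroAtInftyContinuousMap.norm_toBCF_eq_norm] using F2.toBCF.norm_coe_le_norm x
  have hF2n : (0 : ℝ) ≤ ‖F2‖ := norm_nonneg _
  -- pointwise bound of the integrand over `KH`
  have hbnd : ∀ (h k : K) (s : KH), ‖F2 (h * ↑s * k⁻¹, Ad h H) • ρc s‖ ≤ ‖F2‖ := by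
    intro h k s
    refine (norm_smul_le (F2 (h * ↑s * k⁻¹, Ad h H)) (ρc s)).trans ?_
    calc ‖F2 (h * ↑s * k⁻¹, Ad h H)‖ * ‖ρc s‖ ≤ ‖F2‖ * 1 :=
          mul_le_mul (hF2 _) ((ρ s).toLinearIsometry.norm_toContinuousLinearMap_le)
            (norm_nonneg _) hF2n
      _ = ‖F2‖ := mul_one _
  -- norm bound on the kernel
  have hgnorm : ∀ h k : K, ‖g h k‖ ≤ ‖F2‖ := by
    intro h k
    have h1 : ‖g h k‖ ≤ ‖F2‖ * (ν Set.univ).toReal :=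
      norm_integral_le_of_norm_le_const (ae_of_all _ (hbnd h k))
    rw [measure_univ, ENNReal.toReal_one, mul_one] at h1
    exact h1
  -- strong measurability of the kernel in `k` (for fixed `h`)
  have hgsm : ∀ h : K, StronglyMeasurable fun k => g h k := by
    intro h
    have hcont2 : Continuous fun q : K × KH => F2 (h * ↑q.2 * q.1⁻¹, Ad h H) • ρc q.2 := by
      refine (F2.continuous.comp ?_).smul (hρ.comp continuous_snd)
      exact ((continuous_const.mul (continuous_subtype_val.comp continuous_snd)).mul
        (continuous_fst.inv)).prodMk continuous_const
    have hsupp : HasCompactSupport fun q : K × KH => F2 (h * ↑q.2 * q.1⁻¹, Ad h H) • ρc q.2 :=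
      (isClosed_tsupport _).isCompact
    exact (hsupp.stronglyMeasurable_of_prod hcont2).integral_prod_right'
  -- measurability and integrability of `k ↦ g h k (ξ k)`
  have hmeasg : ∀ (h : K) (ξ : Lp V 2 μK),
      AEStronglyMeasurable (fun k => g h k (ξ k)) μK := fun h ξ =>
    (ContinuousLinearMap.id ℂ (V →L[ℂ] V)).aestronglyMeasurable_comp₂
      (hgsm h).aestronglyMeasurable (Lp.aestronglyMeasurable ξ)
  have hintg : ∀ (h : K) (ξ : Lp V 2 μK), Integrable (fun k => g h k (ξ k)) μK := by
    intro h ξ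
    have hξ1 : Integrable (fun k => ξ k) μK := (Lp.memLp ξ).integrable one_le_two
    refine (hξ1.norm.const_mul ‖F2‖).mono' (hmeasg h ξ) (ae_of_all _ fun k => ?_)
    calc ‖g h k (ξ k)‖ ≤ ‖g h k‖ * ‖ξ k‖ := (g h k).le_opNorm _
      _ ≤ ‖F2‖ * ‖ξ k‖ := mul_le_mul_of_nonneg_right (hgnorm h k) (norm_nonneg _)
  -- `L²` norm squared as an integral
  have hnormsq : ∀ ξ : Lp V 2 μK, ‖ξ‖ ^ 2 = ∫ h, ‖ξ h‖ ^ 2 ∂μK := by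
    intro ξ
    have h1 : ⟪ξ, ξ⟫ = ∫ a, ⟪ξ a, ξ a⟫ ∂μK := L2.inner_def ξ ξ
    have h2 : Integrable (fun a => ⟪ξ a, ξ a⟫) μK := L2.integrable_inner ξ ξ
    calc ‖ξ‖ ^ 2 = RCLike.re ⟪ξ, ξ⟫ := (inner_self_eq_norm_sq (𝕜 := ℂ) ξ).symm
      _ = ∫ a, RCLike.re ⟪ξ a, ξ a⟫ ∂μK := by rw [h1, ← integral_re h2]
      _ = ∫ a, ‖ξ a‖ ^ 2 ∂μK :=
          integral_congr_ae (ae_of_all _ fun a => inner_self_eq_norm_sq (𝕜 := ℂ) _)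
  have hint2 : ∀ ξ : Lp V 2 μK, Integrable (fun h => ‖ξ h‖ ^ 2) μK := by
    intro ξ
    exact ((L2.integrable_inner (𝕜 := ℂ) ξ ξ).re).congr
      (ae_of_all _ fun a => inner_self_eq_norm_sq (𝕜 := ℂ) _)
  -- norm squared in `V` via the orthonormal basis
  have hnormV : ∀ x : V, ‖x‖ ^ 2 = ∑ α : Fin d, ‖⟪v α, x⟫‖ ^ 2 := by
    intro x
    have h1 : ⟪x, x⟫ = ∑ α : Fin d, ⟪x, v α⟫ * ⟪v α, x⟫ := (v.sum_inner_mul_inner x x).symm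
    calc ‖x‖ ^ 2 = RCLike.re ⟪x, x⟫ := (inner_self_eq_norm_sq (𝕜 := ℂ) x).symm
      _ = ∑ α : Fin d, RCLike.re (⟪x, v α⟫ * ⟪v α, x⟫) := by rw [h1, map_sum]
      _ = ∑ α : Fin d, ‖⟪v α, x⟫‖ ^ 2 := by
          refine Finset.sum_congr rfl fun α _ => ?_
          rw [← inner_conj_symm x (v α), RCLike.conj_mul]
          simp [← Complex.ofReal_pow]
  -- the key finite-sum bound
  have key : ∀ S : Finset ι, ∑ i ∈ S, ‖T (b i)‖ ^ 2 ≤ (d : ℝ) * ‖F2‖ ^ 2 := by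
    intro S
    have hae : ∀ᵐ h ∂μK, ∀ i ∈ S,
        (T (b i) : K → V) h = ∫ k, g h k ((b i : K → V) k) ∂μK :=
      (eventually_all_finset S).2 fun i _ => hT' (b i)
    have hptwise : ∀ᵐ h ∂μK,
        ∑ i ∈ S, ‖(T (b i) : K → V) h‖ ^ 2 ≤ (d : ℝ) * ‖F2‖ ^ 2 := by
      filter_upwards [hae] with h hh
      -- fixed `h` : Bessel-type estimate
      have main : ∀ α : Fin d,
          ∑ i ∈ S, ‖⟪v α, ∫ k, g h k ((b i : K → V) k) ∂μK⟫‖ ^ 2 ≤ ‖F2‖ ^ 2 := by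
        intro α
        set ξf : K → V := fun k => ContinuousLinearMap.adjoint (g h k) (v α) with hξf
        have hbξ : ∀ k, ‖ξf k‖ ≤ ‖F2‖ := by
          intro k
          calc ‖ξf k‖ ≤ ‖ContinuousLinearMap.adjoint (g h k)‖ * ‖v α‖ :=
                (ContinuousLinearMap.adjoint (g h k)).le_opNorm _
            _ = ‖g h k‖ * 1 := by
                rw [ContinuousLinearMap.adjoint.norm_map, v.orthonormal.1 α]
            _ ≤ ‖F2‖ := by rw [mul_one]; exact hgnorm h k
        have hsmξ : StronglyMeasurable ξf := by
          have hcadj : Continuous fun A : V →L[ℂ] V => ContinuousLinearMap.adjoint A (v α) :=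
            (ContinuousLinearMap.adjoint (𝕜 := ℂ) (E := V)
              (F := V)).continuous.clm_apply continuous_const
          exact hcadj.comp_stronglyMeasurable (hgsm h)
        have hmemξ : MemLp ξf 2 μK :=
          MemLp.of_bound hsmξ.aestronglyMeasurable ‖F2‖ (ae_of_all _ hbξ)
        set Ξ : Lp V 2 μK := hmemξ.toLp ξf with hΞ
        have hΞnorm : ‖Ξ‖ ≤ ‖F2‖ := by
          rw [hΞ, Lp.norm_toLp]
          have hb2 := eLpNorm_le_of_ae_bound (μ := μK) (p := 2) (ae_of_all _ hbξ)
          rw [measure_univ, ENNReal.one_rpow, one_mul] at hb2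
          calc (eLpNorm ξf 2 μK).toReal ≤ (ENNReal.ofReal ‖F2‖).toReal :=
                ENNReal.toReal_mono ENNReal.ofReal_ne_top hb2
            _ = ‖F2‖ := ENNReal.toReal_ofReal hF2n
        have hip : ∀ i ∈ S,
            ⟪v α, ∫ k, g h k ((b i : K → V) k) ∂μK⟫ = ⟪Ξ, b i⟫ := by
          intro i _
          rw [← integral_inner (hintg h (b i)) (v α), L2.inner_def]
          refine integral_congr_ae ?_
          filter_upwards [hmemξ.coeFn_toLp] with k hk
          rw [hk]
          exact (ContinuousLinearMap.adjoint_inner_left (g h k) ((b i : K → V) k) (v α)).symm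
        calc ∑ i ∈ S, ‖⟪v α, ∫ k, g h k ((b i : K → V) k) ∂μK⟫‖ ^ 2
            = ∑ i ∈ S, ‖⟪b i, Ξ⟫‖ ^ 2 := by
              refine Finset.sum_congr rfl fun i hi => ?_
              rw [hip i hi, norm_inner_symm]
          _ ≤ ‖Ξ‖ ^ 2 := b.orthonormal.sum_inner_products_le Ξ
          _ ≤ ‖F2‖ ^ 2 := pow_le_pow_left₀ (norm_nonneg _) hΞnorm 2
      calc ∑ i ∈ S, ‖(T (b i) : K → V) h‖ ^ 2
          = ∑ i ∈ S, ∑ α : Fin d, ‖⟪v α, ∫ k, g h k ((b i : K → V) k) ∂μK⟫‖ ^ 2 := by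
            refine Finset.sum_congr rfl fun i hi => ?_
            rw [hh i hi, hnormV]
        _ = ∑ α : Fin d, ∑ i ∈ S, ‖⟪v α, ∫ k, g h k ((b i : K → V) k) ∂μK⟫‖ ^ 2 :=
            Finset.sum_comm
        _ ≤ ∑ _α : Fin d, ‖F2‖ ^ 2 := Finset.sum_le_sum fun α _ => main α
        _ = (d : ℝ) * ‖F2‖ ^ 2 := by
            simp [Finset.sum_const, Finset.card_univ, nsmul_eq_mul]
    calc ∑ i ∈ S, ‖T (b i)‖ ^ 2
        = ∑ i ∈ S, ∫ h, ‖(T (b i) : K → V) h‖ ^ 2 ∂μK :=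
          Finset.sum_congr rfl fun i _ => hnormsq _
      _ = ∫ h, ∑ i ∈ S, ‖(T (b i) : K → V) h‖ ^ 2 ∂μK :=
          (integral_finset_sum S fun i _ => hint2 _).symm
      _ ≤ ∫ _h, ((d : ℝ) * ‖F2‖ ^ 2) ∂μK :=
          integral_mono_ae (integrable_finset_sum S fun i _ => hint2 _)
            (integrable_const _) hptwise
      _ = (d : ℝ) * ‖F2‖ ^ 2 := by simp
  have hsumm : Summable fun i : ι => ‖T (b i)‖ ^ 2 :=
    summable_of_sum_le (fun i => by positivity) key
  exact ⟨hsumm, Summable.tsum_le_of_sum_le hsumm key⟩
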